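/- Given the G₂ contraction identity φ_{ijk} φ^k{}_{ab} = g_{ia}g_{jb} - g_{ib}g_{ja} + ψ_{ijab}, for any 4-tensors of the form P_{ijab} = (1/2)R_{ijab} + T_{ia}T_{jb} (with R the Riemann tensor and T antisymmetric), the full contraction (∇^j T^{ik})(∇_i T_{jk}) equals ||∇T||² - (1/8)(R_{ijab}+2T_{ia}T_{jb})[(R^{ijab}+2T^{ia}T^{jb}) - (R^{ijba}+2T^{ib}T^{ja}) + (R^{ijmn}+2T^{im}T^{jn})ψ_{mn}{}^{ab}], provided ∇^j T^{ik} = ∇^i T^{jk} + ((1/2)R^{ij}{}_{ab} + T^i{}_a T^j{}_b)φ^{kab}. -/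
import Mathlib


/-- Given the G₂ contraction identity `φ_{ijk} φ^k{}_{ab} = g_{ia}g_{jb} - g_{ib}g_{ja}
+ ψ_{ijab}` on `ℝ⁷` and the Bianchi-type identity
`∇^j T^{ik} = ∇^i T^{jk} + ((1/2)R^{ij}{}_{ab} + T^i{}_a T^j{}_b)φ^{kab}`
(with `S_{ijk} := ∇_i T_{jk}`, `R` having the Riemann symmetries, `T` antisymmetric,
`φ` a 3-form and `ψ` a 4-form), the full contraction `(∇^j T^{ik})(∇_i T_{jk})` equals
`‖∇T‖² - (1/8)(R_{ijab}+2T_{ia}T_{jb})[(R^{ijab}+2T^{ia}T^{jb})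
- (R^{ijba}+2T^{ib}T^{ja}) + (R^{ijmn}+2T^{im}T^{jn})ψ_{mn}{}^{ab}]`. -/
theorem statement10
    (R : Fin 7 → Fin 7 → Fin 7 → Fin 7 → ℝ)
    (T : Fin 7 → Fin 7 → ℝ)
    (S : Fin 7 → Fin 7 → Fin 7 → ℝ)
    (φ : Fin 7 → Fin 7 → Fin 7 → ℝ)
    (ψ : Fin 7 → Fin 7 → Fin 7 → Fin 7 → ℝ)
    (hR1 : ∀ i j a b, R i j a b = -R j i a b)
    (hR2 : ∀ i j a b, R i j a b = -R i j b a)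
    (hRpair : ∀ i j a b, R i j a b = R a b i j)
    (hT : ∀ i j, T i j = -T j i)
    (hS : ∀ i j k, S i j k = -S i k j)
    (hφ1 : ∀ i j k, φ i j k = -φ j i k)
    (hφ2 : ∀ i j k, φ i j k = -φ i k j)
    (hψpair : ∀ a b m n, ψ a b m n = ψ m n a b)
    (hφψ : ∀ i j a b, (∑ k, φ i j k * φ k a b) =
      (if i = a then (1 : ℝ) else 0) * (if j = b then (1 : ℝ) else 0)
        - (if i = b then (1 : ℝ) else 0) * (if j = a then (1 : ℝ) else 0)
        + ψ i j a b)
    (hBianchi : ∀ i j k, S j i k = S i j k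
        + ∑ a, ∑ b, ((1 / 2) * R i j a b + T i a * T j b) * φ k a b) :
    (∑ i, ∑ j, ∑ k, S j i k * S i j k) =
      (∑ i, ∑ j, ∑ k, S i j k * S i j k)
        - (1 / 8) * ∑ i, ∑ j, ∑ a, ∑ b,
            (R i j a b + 2 * T i a * T j b) *
              ((R i j a b + 2 * T i a * T j b)
                - (R i j b a + 2 * T i b * T j a)
                + ∑ m, ∑ n, (R i j m n + 2 * T i m * T j n) * ψ m n a b) := by
  classical
  set P : Fin 7 → Fin 7 → Fin 7 → Fin 7 → ℝ :=
    fun i j a b => (1 / 2) * R i j a b + T i a * T j b with hP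
  set A : Fin 7 → Fin 7 → Fin 7 → ℝ :=
    fun i j k => ∑ a, ∑ b, P i j a b * φ k a b with hA
  have hAe : ∀ i j k, A i j k = ∑ a, ∑ b, P i j a b * φ k a b := fun _ _ _ => rfl
  have hPe : ∀ i j a b, P i j a b = (1 / 2) * R i j a b + T i a * T j b :=
    fun _ _ _ _ => rfl
  have hφ3 : ∀ k a b, φ k a b = φ a b k := by
    intro k a b
    rw [hφ1 k a b, hφ2 a k b, neg_neg]
  have hB : ∀ i j k, S j i k = S i j k + A i j k := by
    intro i j k
    rw [hBianchi i j k, hAe]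
  -- symmetric × antisymmetric sums vanish
  have skew : ∀ (f g : Fin 7 → Fin 7 → ℝ), (∀ a b, f a b = f b a) →
      (∀ a b, g a b = -g b a) → (∑ a, ∑ b, f a b * g a b) = 0 := by
    intro f g hf hg
    have h1 : (∑ a, ∑ b, f a b * g a b) = ∑ a, ∑ b, f b a * g b a :=
      Finset.sum_comm
    have h2 : (∑ a, ∑ b, f b a * g b a) = -∑ a, ∑ b, f a b * g a b := by
      have : ∀ a ∈ (Finset.univ : Finset (Fin 7)), ∀ b ∈ (Finset.univ : Finset (Fin 7)),
          f b a * g b a = -(f a b * g a b) := by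
        intro a _ b _
        rw [hg b a, ← hf a b]
        ring
      calc (∑ a, ∑ b, f b a * g b a) = ∑ a, ∑ b, -(f a b * g a b) :=
            Finset.sum_congr rfl fun a ha => Finset.sum_congr rfl (this a ha)
        _ = -∑ a, ∑ b, f a b * g a b := by simp
    linarith [h1.trans h2]
  have hAanti : ∀ i j k, A j i k = -A i j k := by
    intro i j k
    have hsum : A j i k + A i j k
        = ∑ a, ∑ b, (T j a * T i b + T i a * T j b) * φ k a b := by
      rw [hAe, hAe, ← Finset.sum_add_distrib]
      refine Finset.sum_congr rfl fun a _ => ?_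
      rw [← Finset.sum_add_distrib]
      refine Finset.sum_congr rfl fun b _ => ?_
      rw [hPe, hPe, hR1 j i a b]
      ring
    have hzero : (∑ a, ∑ b, (T j a * T i b + T i a * T j b) * φ k a b) = 0 :=
      skew _ _ (fun a b => by ring) (fun a b => hφ2 k a b)
    linarith [hsum, hzero]
  -- Step 1 : split LHS
  have e1 : (∑ i, ∑ j, ∑ k, S j i k * S i j k)
      = (∑ i, ∑ j, ∑ k, S i j k * S i j k)
        + (∑ i, ∑ j, ∑ k, A i j k * S i j k) := by
    rw [← Finset.sum_add_distrib]
    refine Finset.sum_congr rfl fun i _ => ?_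
    rw [← Finset.sum_add_distrib]
    refine Finset.sum_congr rfl fun j _ => ?_
    rw [← Finset.sum_add_distrib]
    refine Finset.sum_congr rfl fun k _ => ?_
    rw [hB i j k]
    ring
  -- Step 2 : the cross term equals -(1/2) Σ A²
  have e2a : (∑ i, ∑ j, ∑ k, A i j k * S j i k)
      = -(∑ i, ∑ j, ∑ k, A i j k * S i j k) := by
    have h1 : (∑ i, ∑ j, ∑ k, A i j k * S j i k)
        = ∑ i, ∑ j, ∑ k, A j i k * S i j k := Finset.sum_comm
    rw [h1]
    calc (∑ i, ∑ j, ∑ k, A j i k * S i j k)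
        = ∑ i, ∑ j, ∑ k, -(A i j k * S i j k) := by
          refine Finset.sum_congr rfl fun i _ => Finset.sum_congr rfl
            fun j _ => Finset.sum_congr rfl fun k _ => ?_
          rw [hAanti i j k]
          ring
      _ = -(∑ i, ∑ j, ∑ k, A i j k * S i j k) := by simp
  have e2b : (∑ i, ∑ j, ∑ k, A i j k * S j i k)
      = (∑ i, ∑ j, ∑ k, A i j k * S i j k)
        + (∑ i, ∑ j, ∑ k, A i j k * A i j k) := by
    rw [← Finset.sum_add_distrib]
    refine Finset.sum_congr rfl fun i _ => ?_
    rw [← Finset.sum_add_distrib]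
    refine Finset.sum_congr rfl fun j _ => ?_
    rw [← Finset.sum_add_distrib]
    refine Finset.sum_congr rfl fun k _ => ?_
    rw [hB i j k]
    ring
  have e2 : (∑ i, ∑ j, ∑ k, A i j k * S i j k)
      = -(1 / 2) * (∑ i, ∑ j, ∑ k, A i j k * A i j k) := by
    have := e2a.symm.trans e2b
    linarith
  -- φ-φ contraction in first index
  have hkk : ∀ a b c d, (∑ k, φ k a b * φ k c d)
      = (if a = c then (1 : ℝ) else 0) * (if b = d then (1 : ℝ) else 0)
        - (if a = d then (1 : ℝ) else 0) * (if b = c then (1 : ℝ) else 0)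
        + ψ a b c d := by
    intro a b c d
    rw [← hφψ a b c d]
    exact Finset.sum_congr rfl fun k _ => by rw [hφ3 k a b]
  -- Step 3 : Σₖ A² at fixed i j
  have key : ∀ i j, (∑ k, A i j k * A i j k)
      = ∑ a, ∑ b, P i j a b *
          (P i j a b - P i j b a + ∑ c, ∑ d, P i j c d * ψ c d a b) := by
    intro i j
    have inner : ∀ a b, (∑ k, φ k a b * A i j k)
        = P i j a b - P i j b a + ∑ c, ∑ d, P i j c d * ψ c d a b := by
      intro a b
      have h1 : ∀ k, φ k a b * A i j k
          = ∑ c, ∑ d, P i j c d * (φ k a b * φ k c d) := by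
        intro k
        rw [hAe, Finset.mul_sum]
        refine Finset.sum_congr rfl fun c _ => ?_
        rw [Finset.mul_sum]
        exact Finset.sum_congr rfl fun d _ => by ring
      calc (∑ k, φ k a b * A i j k)
          = ∑ k, ∑ c, ∑ d, P i j c d * (φ k a b * φ k c d) :=
            Finset.sum_congr rfl fun k _ => h1 k
        _ = ∑ c, ∑ k, ∑ d, P i j c d * (φ k a b * φ k c d) := Finset.sum_comm
        _ = ∑ c, ∑ d, ∑ k, P i j c d * (φ k a b * φ k c d) :=
            Finset.sum_congr rfl fun c _ => Finset.sum_comm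
        _ = ∑ c, ∑ d, P i j c d * (∑ k, φ k a b * φ k c d) := by
            refine Finset.sum_congr rfl fun c _ => Finset.sum_congr rfl
              fun d _ => ?_
            rw [Finset.mul_sum]
        _ = ∑ c, ∑ d, P i j c d *
              ((if a = c then (1 : ℝ) else 0) * (if b = d then (1 : ℝ) else 0)
                - (if a = d then (1 : ℝ) else 0) * (if b = c then (1 : ℝ) else 0)
                + ψ a b c d) := by
            refine Finset.sum_congr rfl fun c _ => Finset.sum_congr rfl
              fun d _ => ?_
            rw [hkk a b c d]
        _ = P i j a b - P i j b a + ∑ c, ∑ d, P i j c d * ψ c d a b := by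
            have expand : ∀ c d, P i j c d *
                ((if a = c then (1 : ℝ) else 0) * (if b = d then (1 : ℝ) else 0)
                  - (if a = d then (1 : ℝ) else 0) * (if b = c then (1 : ℝ) else 0)
                  + ψ a b c d)
              = P i j c d * ((if a = c then (1 : ℝ) else 0) * (if b = d then (1 : ℝ) else 0))
                - P i j c d * ((if a = d then (1 : ℝ) else 0) * (if b = c then (1 : ℝ) else 0))
                + P i j c d * ψ a b c d := by intro c d; ring
            simp only [expand, Finset.sum_add_distrib, Finset.sum_sub_distrib]
            congr 1
            · congr 1
              · -- Σ Σ P c d δ_ac δ_bd = P a b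
                simp [mul_ite, ite_mul, Finset.mul_sum]
              · -- Σ Σ P c d δ_ad δ_bc = P b a
                simp [mul_ite, ite_mul, Finset.mul_sum]
            · exact Finset.sum_congr rfl fun c _ => Finset.sum_congr rfl
                fun d _ => by rw [hψpair a b c d]
    calc (∑ k, A i j k * A i j k)
        = ∑ k, ∑ a, ∑ b, (P i j a b * φ k a b) * A i j k := by
          refine Finset.sum_congr rfl fun k _ => ?_
          conv_lhs => rw [show A i j k * A i j k
            = (∑ a, ∑ b, P i j a b * φ k a b) * A i j k from by rw [← hAe]]
          rw [Finset.sum_mul]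
          exact Finset.sum_congr rfl fun a _ => Finset.sum_mul _ _ _
      _ = ∑ a, ∑ k, ∑ b, (P i j a b * φ k a b) * A i j k := Finset.sum_comm
      _ = ∑ a, ∑ b, ∑ k, (P i j a b * φ k a b) * A i j k :=
          Finset.sum_congr rfl fun a _ => Finset.sum_comm
      _ = ∑ a, ∑ b, P i j a b * (∑ k, φ k a b * A i j k) := by
          refine Finset.sum_congr rfl fun a _ => Finset.sum_congr rfl
            fun b _ => ?_
          rw [Finset.mul_sum]
          exact Finset.sum_congr rfl fun k _ => by ring
      _ = ∑ a, ∑ b, P i j a b *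
            (P i j a b - P i j b a + ∑ c, ∑ d, P i j c d * ψ c d a b) := by
          refine Finset.sum_congr rfl fun a _ => Finset.sum_congr rfl
            fun b _ => ?_
          rw [inner a b]
  -- Step 4 : rewrite the RHS quadruple sum
  have e3 : (∑ i, ∑ j, ∑ a, ∑ b,
        (R i j a b + 2 * T i a * T j b) *
          ((R i j a b + 2 * T i a * T j b)
            - (R i j b a + 2 * T i b * T j a)
            + ∑ m, ∑ n, (R i j m n + 2 * T i m * T j n) * ψ m n a b))
      = 4 * (∑ i, ∑ j, ∑ k, A i j k * A i j k) := by
    rw [Finset.mul_sum]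
    refine Finset.sum_congr rfl fun i _ => ?_
    rw [Finset.mul_sum]
    refine Finset.sum_congr rfl fun j _ => ?_
    rw [key i j, Finset.mul_sum]
    refine Finset.sum_congr rfl fun a _ => ?_
    rw [Finset.mul_sum]
    refine Finset.sum_congr rfl fun b _ => ?_
    have h2 : (∑ m, ∑ n, (R i j m n + 2 * T i m * T j n) * ψ m n a b)
        = 2 * ∑ c, ∑ d, P i j c d * ψ c d a b := by
      rw [Finset.mul_sum]
      refine Finset.sum_congr rfl fun m _ => ?_
      rw [Finset.mul_sum]
      refine Finset.sum_congr rfl fun n _ => ?_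
      rw [hPe]
      ring
    rw [h2, hPe i j a b, hPe i j b a]
    ring
  rw [e1, e2, e3]
  ring
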